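/- Let X be a nonempty compact zero-dimensional Hausdorff space, let Z = ω × X where ω carries the discrete topology, and let Z* = βZ \ Z be the Čech–Stone remainder of Z. For f ∈ H(X), let f^ω be the homeomorphism of Z defined by f^ω(n,x) = (n, f(x)); let βf^ω : βZ → βZ be its Stone extension, and let f^β be the restriction of βf^ω to Z*. Then f^β is a homeomorphism of Z*, and the map i : H(X) → H(Z*) defined by i(f) = f^β is an injective group homomorphism. -/

import Mathlib

open Set Topology TopologicalSpace

/-- The compact-open topology on the group of self-homeomorphisms of a space:
the topology induced from the compact-open topology on `C(X, X)`. -/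
instance homeomorphCompactOpen (X : Type*) [TopologicalSpace X] :
    TopologicalSpace (X ≃ₜ X) :=
  TopologicalSpace.induced (fun h : X ≃ₜ X => (h : C(X, X))) ContinuousMap.compactOpen

/-- The group of self-homeomorphisms of a space, under composition. -/
instance homeomorphGroup (X : Type*) [TopologicalSpace X] : Group (X ≃ₜ X) where
  mul f g := g.trans f
  one := Homeomorph.refl X
  inv := Homeomorph.symm
  mul_assoc _ _ _ := Homeomorph.ext fun _ => rfl
  one_mul _ := Homeomorph.ext fun _ => rfl
  mul_one _ := Homeomorph.ext fun _ => rfl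
  inv_mul_cancel f := Homeomorph.ext fun x => f.symm_apply_apply x

/-- The weight of a topological space: the least cardinality of a base of its topology. -/
noncomputable def TopologicalSpace.weight (X : Type u) [TopologicalSpace X] : Cardinal.{u} :=
  ⨅ B : {B : Set (Set X) // TopologicalSpace.IsTopologicalBasis B}, Cardinal.mk B.1

/-- A set is an Fσ-set if it is a countable union of closed sets. -/
def IsFsigma {X : Type*} [TopologicalSpace X] (s : Set X) : Prop :=
  ∃ F : ℕ → Set X, (∀ n, IsClosed (F n)) ∧ s = ⋃ n, F n

/-- An F-space (for normal spaces): disjoint open Fσ-sets have disjoint closures. -/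
def IsFSpace (X : Type*) [TopologicalSpace X] : Prop :=
  ∀ U V : Set X, IsOpen U → IsOpen V → IsFsigma U → IsFsigma V → Disjoint U V →
    Disjoint (closure U) (closure V)

/-- A Parovičenko space: a compact zero-dimensional F-space of weight `𝔠` in which
every nonempty Gδ-set has infinite interior. -/
structure IsParovicenko (X : Type u) [TopologicalSpace X] : Prop where
  compact : CompactSpace X
  t2 : T2Space X
  zeroDim : TopologicalSpace.IsTopologicalBasis {s : Set X | IsClopen s}
  fSpace : IsFSpace X
  weight_eq : TopologicalSpace.weight X = Cardinal.continuum
  gdelta_int : ∀ s : Set X, IsGδ s → s.Nonempty → (interior s).Infinite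

/-- The Gδ-modification of a topology: the topology generated by the Gδ-sets. -/
def gdeltaMod {X : Type*} (t : TopologicalSpace X) : TopologicalSpace X :=
  TopologicalSpace.generateFrom {s : Set X | @IsGδ X t s}

/-- The Čech–Stone remainder `βα \ α` of a space `α`. -/
abbrev CechStoneRemainder (α : Type u) [TopologicalSpace α] : Type u :=
  {p : StoneCech α // p ∉ Set.range (stoneCechUnit : α → StoneCech α)}

/-- `ω* = βω \ ω`, the Čech–Stone remainder of the countable discrete space `ω`. -/
abbrev OmegaStar : Type := CechStoneRemainder ℕ

variable {X : Type u} [TopologicalSpace X]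

/-- `f^ω : ω × X ≃ₜ ω × X`, `(n, x) ↦ (n, f x)`. -/
def fOmega (f : X ≃ₜ X) : (ℕ × X) ≃ₜ (ℕ × X) := (Homeomorph.refl ℕ).prodCongr f

/-- The Stone extension `βf^ω : β(ω × X) → β(ω × X)` of `f^ω` (composed with the unit). -/
noncomputable def betaFOmega (f : X ≃ₜ X) : StoneCech (ℕ × X) → StoneCech (ℕ × X) :=
  stoneCechExtend (continuous_stoneCechUnit.comp (fOmega f).continuous)

/-- For `E ⊆ α`, the trace `E* = cl_{βα} E ∩ (βα \ α)` of `E` on the remainder. -/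
def starSet {α : Type u} [TopologicalSpace α] (E : Set α) : Set (StoneCech α) :=
  closure (stoneCechUnit '' E) ∩ {p | p ∉ Set.range (stoneCechUnit : α → StoneCech α)}

section Aux

variable {Y : Type} [TopologicalSpace Y] [CompactSpace Y] [T2Space Y]

lemma betaFOmega_unit (f : Y ≃ₜ Y) (z : ℕ × Y) :
    betaFOmega f (stoneCechUnit z) = stoneCechUnit (fOmega f z) :=
  congrFun (stoneCechExtend_extends _) z

lemma betaFOmega_comp (f g : Y ≃ₜ Y) :
    betaFOmega f ∘ betaFOmega g = betaFOmega (g.trans f) := by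
  apply stoneCech_hom_ext ((continuous_stoneCechExtend _).comp (continuous_stoneCechExtend _))
    (continuous_stoneCechExtend _)
  funext z
  show betaFOmega f (betaFOmega g (stoneCechUnit z)) = betaFOmega (g.trans f) (stoneCechUnit z)
  rw [betaFOmega_unit, betaFOmega_unit, betaFOmega_unit]
  rfl

lemma betaFOmega_refl : betaFOmega (Homeomorph.refl Y) = id := by
  apply stoneCech_hom_ext (continuous_stoneCechExtend _) continuous_id
  funext z
  show betaFOmega (Homeomorph.refl _) (stoneCechUnit z) = stoneCechUnit z
  rw [betaFOmega_unit]
  rfl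

lemma betaFOmega_symm_comp (f : Y ≃ₜ Y) :
    ∀ p, betaFOmega f.symm (betaFOmega f p) = p := by
  intro p
  have h := betaFOmega_comp f.symm f
  rw [f.self_trans_symm, betaFOmega_refl] at h
  exact congrFun h p

lemma betaFOmega_notMem (f : Y ≃ₜ Y) {p : StoneCech (ℕ × Y)}
    (hp : p ∉ Set.range (stoneCechUnit : ℕ × Y → StoneCech (ℕ × Y))) :
    betaFOmega f p ∉ Set.range (stoneCechUnit : ℕ × Y → StoneCech (ℕ × Y)) := by
  rintro ⟨z, hz⟩
  apply hp
  have := betaFOmega_symm_comp f p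
  rw [← hz, betaFOmega_unit] at this
  exact ⟨_, this⟩

/-- The restriction of `βf^ω` to the remainder, as a homeomorphism. -/
noncomputable def fBeta (f : Y ≃ₜ Y) :
    CechStoneRemainder (ℕ × Y) ≃ₜ CechStoneRemainder (ℕ × Y) where
  toFun p := ⟨betaFOmega f p.1, betaFOmega_notMem f p.2⟩
  invFun p := ⟨betaFOmega f.symm p.1, betaFOmega_notMem f.symm p.2⟩
  left_inv p := Subtype.ext (betaFOmega_symm_comp f p.1)
  right_inv p := by
    apply Subtype.ext
    have h := betaFOmega_symm_comp f.symm p.1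
    simpa using h
  continuous_toFun :=
    Continuous.subtype_mk ((continuous_stoneCechExtend _).comp continuous_subtype_val) _
  continuous_invFun :=
    Continuous.subtype_mk ((continuous_stoneCechExtend _).comp continuous_subtype_val) _

lemma fBeta_mul (f g : Y ≃ₜ Y) : fBeta (f * g) = fBeta f * fBeta g := by
  apply Homeomorph.ext
  intro p
  apply Subtype.ext
  show betaFOmega (g.trans f) p.1 = betaFOmega f (betaFOmega g p.1)
  exact (congrFun (betaFOmega_comp f g) p.1).symm

lemma exists_remainder_pt (U : Set Y) (hU : U.Nonempty) :
    ∃ p : StoneCech (ℕ × Y),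
      p ∈ closure (stoneCechUnit '' ((Set.univ : Set ℕ) ×ˢ U)) ∧
      p ∉ Set.range (stoneCechUnit : ℕ × Y → StoneCech (ℕ × Y)) := by
  obtain ⟨x0, hx0⟩ := hU
  set z : ℕ → StoneCech (ℕ × Y) := fun n => stoneCechUnit (n, x0) with hz
  obtain ⟨p, hp⟩ := exists_clusterPt_of_compactSpace (Filter.map z Filter.atTop)
  have htail : ∀ m : ℕ, p ∈ closure (z '' Set.Ici m) := by
    intro m
    rw [mem_closure_iff_clusterPt]
    exact hp.mono (Filter.le_principal_iff.mpr
      (Filter.image_mem_map (Filter.Ici_mem_atTop m)))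
  refine ⟨p, ?_, ?_⟩
  · refine closure_mono ?_ (htail 0)
    rintro _ ⟨n, -, rfl⟩
    exact ⟨(n, x0), ⟨trivial, hx0⟩, rfl⟩
  · rintro ⟨w, rfl⟩
    set m := w.1 with hm
    have hgc : Continuous (fun q : ℕ × Y => decide (m < q.1)) :=
      (continuous_of_discreteTopology (f := fun n : ℕ => decide (m < n))).comp continuous_fst
    set h := stoneCechExtend hgc with hh
    have hclosed : IsClosed (h ⁻¹' {true}) :=
      (isClosed_discrete {true}).preimage (continuous_stoneCechExtend hgc)
    have hmem : closure (z '' Set.Ici (m + 1)) ⊆ h ⁻¹' {true} := by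
      apply hclosed.closure_subset_iff.mpr
      rintro _ ⟨n, hn, rfl⟩
      have : h (z n) = decide (m < n) := congrFun (stoneCechExtend_extends hgc) (n, x0)
      simp only [Set.mem_preimage, this, Set.mem_singleton_iff, decide_eq_true_eq]
      exact hn
    have h1 : h (stoneCechUnit w) = true := hmem (htail (m + 1))
    have h2 : h (stoneCechUnit w) = decide (m < m) :=
      congrFun (stoneCechExtend_extends hgc) w
    rw [h1] at h2
    simp at h2

lemma fBeta_eq_one_imp (hzd : TopologicalSpace.IsTopologicalBasis {s : Set Y | IsClopen s})
    (f : Y ≃ₜ Y) (h1 : fBeta f = 1) : f = 1 := by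
  by_contra hf
  have : ∃ x : Y, f x ≠ x := by
    by_contra hx
    push_neg at hx
    exact hf (Homeomorph.ext hx)
  obtain ⟨x, hx⟩ := this
  -- find a clopen V with x ∈ V and f x ∉ V
  obtain ⟨V, hVcl, hxV, hVsub⟩ :=
    hzd.exists_subset_of_mem_open
      (show x ∈ ({f x}ᶜ : Set Y) from fun h => hx (Set.mem_singleton_iff.mp h).symm)
      isOpen_compl_singleton
  set U := V ∩ f ⁻¹' Vᶜ with hU
  have hUcl : IsClopen U := hVcl.inter (hVcl.compl.preimage f.continuous)
  have hxU : x ∈ U := ⟨hxV, fun h => hVsub h rfl⟩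
  have hUdisj : ∀ u ∈ U, f u ∉ U := fun u hu hfu => hu.2 hfu.1
  obtain ⟨p, hpcl, hprange⟩ := exists_remainder_pt U ⟨x, hxU⟩
  -- the Bool-valued indicator of ℕ × U
  have hgc : Continuous (fun q : ℕ × Y => U.boolIndicator q.2) :=
    ((continuous_boolIndicator_iff_isClopen U).mpr hUcl).comp continuous_snd
  set h := stoneCechExtend hgc with hh
  have hcont := continuous_stoneCechExtend hgc
  have htrue : h p = true := by
    have hclosed : IsClosed (h ⁻¹' {true}) := (isClosed_discrete {true}).preimage hcont
    refine hclosed.closure_subset_iff.mpr ?_ hpcl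
    rintro _ ⟨q, ⟨-, hq2⟩, rfl⟩
    have : h (stoneCechUnit q) = U.boolIndicator q.2 := congrFun (stoneCechExtend_extends hgc) q
    simpa [this] using (U.mem_iff_boolIndicator q.2).mp hq2
  have hfalse : h (betaFOmega f p) = false := by
    have himg : betaFOmega f p ∈
        closure (betaFOmega f '' (stoneCechUnit '' ((Set.univ : Set ℕ) ×ˢ U))) :=
      image_closure_subset_closure_image (continuous_stoneCechExtend _) ⟨p, hpcl, rfl⟩
    have hclosed : IsClosed (h ⁻¹' {false}) := (isClosed_discrete {false}).preimage hcont
    refine hclosed.closure_subset_iff.mpr ?_ himg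
    rintro _ ⟨_, ⟨q, ⟨-, hq2⟩, rfl⟩, rfl⟩
    rw [betaFOmega_unit]
    have : h (stoneCechUnit (fOmega f q)) = U.boolIndicator (fOmega f q).2 :=
      congrFun (stoneCechExtend_extends hgc) _
    have hnot : f q.2 ∉ U := hUdisj q.2 hq2
    simpa [this] using (show U.boolIndicator (fOmega f q).2 = false from
      (U.notMem_iff_boolIndicator (f q.2)).mp hnot)
  have : betaFOmega f p = p := by
    have := congrArg (fun (e : CechStoneRemainder (ℕ × Y) ≃ₜ CechStoneRemainder (ℕ × Y)) =>
      (e ⟨p, hprange⟩ : StoneCech (ℕ × Y))) h1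
    exact this
  rw [this, htrue] at hfalse
  simp at hfalse

end Aux

/-- For `f ∈ H(X)`, the restriction `f^β` of the Stone extension of
`f^ω` to the remainder `Z* = β(ω × X) \ (ω × X)` is a homeomorphism of `Z*`, and
`i : H(X) → H(Z*)`, `i f = f^β`, is an injective group homomorphism. -/
theorem exists_injective_hom_to_homeoRemainder (X : Type) [TopologicalSpace X]
    [CompactSpace X] [T2Space X] [Nonempty X]
    (hzd : TopologicalSpace.IsTopologicalBasis {s : Set X | IsClopen s}) :
    ∃ i : (X ≃ₜ X) →* (CechStoneRemainder (ℕ × X) ≃ₜ CechStoneRemainder (ℕ × X)),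
      Function.Injective i ∧
      ∀ (f : X ≃ₜ X) (p : CechStoneRemainder (ℕ × X)),
        ((i f) p : StoneCech (ℕ × X)) = betaFOmega f (p : StoneCech (ℕ × X)) := by
  refine ⟨{ toFun := fBeta
            map_one' := ?_
            map_mul' := fBeta_mul }, ?_, fun f p => rfl⟩
  · apply Homeomorph.ext
    intro p
    apply Subtype.ext
    show betaFOmega (Homeomorph.refl X) p.1 = p.1
    rw [betaFOmega_refl]; rfl
  · rw [injective_iff_map_eq_one]
    exact fun f hf => fBeta_eq_one_imp hzd f hf
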